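/- Let i₁ < i₂ < … < i_s be positive integers and let C ⊆ ℝ^s be a polyhedral cone (the conical hull of a finite set of vectors). Then C is positive if and only if there exists ε₀ > 0 such that for every ε with 0 < ε < ε₀ the vector (ε^{−i₁}, ε^{−i₂}, …, ε^{−i_s}) lies in C. -/

import Mathlib

noncomputable section

/-- Projection of `ℝ^s` onto the first `k` coordinates. -/
def prProj {s : ℕ} (k : ℕ) (hk : k ≤ s) (x : Fin s → ℝ) : Fin k → ℝ :=
  fun j => x (Fin.castLE hk j)

/-- The vector `(0,…,0,1) ∈ ℝ^k`. -/
def lastUnit (k : ℕ) : Fin k → ℝ :=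
  fun j => if (j : ℕ) + 1 = k then 1 else 0

/-- A convex cone `C ⊆ ℝ^s` is positive if `(0,…,0,1) ∈ pr_k(C)` for every
`1 ≤ k ≤ s`. -/
def IsPositiveCone {s : ℕ} (C : Set (Fin s → ℝ)) : Prop :=
  ∀ k, 1 ≤ k → ∀ hk : k ≤ s, lastUnit k ∈ prProj k hk '' C

/-- Carathéodory for cones: any nonnegative combination over `u` is a nonnegative
combination over a subset `t ⊆ u` on which `f` is linearly independent. -/
theorem cone_caratheodory {ι : Type*} {V : Type*} [AddCommGroup V] [Module ℝ V]
    (f : ι → V) (u : Finset ι) (lam : ι → ℝ) (hlam : ∀ i, 0 ≤ lam i) :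
    ∃ t ⊆ u, LinearIndependent ℝ (fun i : t => f i) ∧
      ∃ mu : ι → ℝ, (∀ i, 0 ≤ mu i) ∧ ∑ i ∈ u, lam i • f i = ∑ i ∈ t, mu i • f i := by
  classical
  induction u using Finset.strongInduction generalizing lam with
  | _ u ih =>
    by_cases hind : LinearIndependent ℝ (fun i : u => f i)
    · exact ⟨u, le_refl _, hind, lam, hlam, rfl⟩
    · rw [Fintype.not_linearIndependent_iff] at hind
      obtain ⟨g, hg0, i₀, hi₀⟩ := hind
      -- WLOG some coefficient is positive
      obtain ⟨g, hg0, i₀, hi₀⟩ : ∃ g : u → ℝ, ∑ i : u, g i • f i = 0 ∧ ∃ i, 0 < g i := by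
        rcases lt_or_gt_of_ne hi₀ with h | h
        · exact ⟨-g, by simpa [neg_smul] using congrArg Neg.neg hg0, i₀, by simpa using h⟩
        · exact ⟨g, hg0, i₀, h⟩
      set F : Finset u := Finset.univ.filter (fun i => 0 < g i) with hF
      have hFne : F.Nonempty := ⟨i₀, by simp [hF, hi₀]⟩
      obtain ⟨j₀, hj₀F, hj₀min⟩ := F.exists_min_image (fun i => lam ↑i / g i) hFne
      have hgj₀ : 0 < g j₀ := by simpa [hF] using hj₀F
      set t₀ : ℝ := lam ↑j₀ / g j₀ with ht₀
      have ht₀0 : 0 ≤ t₀ := div_nonneg (hlam _) hgj₀.le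
      set lam' : ι → ℝ := fun i => lam i - t₀ * (if h : i ∈ u then g ⟨i, h⟩ else 0) with hlam'
      have hlam'0 : ∀ i, 0 ≤ lam' i := by
        intro i
        by_cases h : i ∈ u
        · simp only [hlam', dif_pos h]
          rcases le_or_gt (g ⟨i, h⟩) 0 with hgi | hgi
          · have : t₀ * g ⟨i, h⟩ ≤ 0 := mul_nonpos_of_nonneg_of_nonpos ht₀0 hgi
            linarith [hlam i]
          · have hmem : (⟨i, h⟩ : u) ∈ F := by simp [hF, hgi]
            have := hj₀min _ hmem
            rw [div_le_div_iff₀ hgj₀ hgi] at this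
            have : t₀ * g ⟨i, h⟩ ≤ lam i := by
              rw [ht₀, div_mul_eq_mul_div, div_le_iff₀ hgj₀]; linarith
            linarith
        · simp only [hlam', dif_neg h]
          simpa using hlam i
      have hj₀zero : lam' ↑j₀ = 0 := by
        simp only [hlam', dif_pos j₀.2]
        rw [ht₀, div_mul_eq_mul_div]
        field_simp
        ring
      have hsum : ∑ i ∈ u, lam' i • f i = ∑ i ∈ u, lam i • f i := by
        simp only [hlam', sub_smul, Finset.sum_sub_distrib]
        have : ∑ i ∈ u, (t₀ * if h : i ∈ u then g ⟨i, h⟩ else 0) • f i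
            = t₀ • ∑ i : u, g i • f i := by
          rw [Finset.smul_sum, ← Finset.sum_attach u
            (fun i => (t₀ * if h : i ∈ u then g ⟨i, h⟩ else 0) • f i)]
          refine Finset.sum_congr rfl fun i _ => ?_
          rw [dif_pos i.2, mul_smul]
        rw [this, hg0, smul_zero, sub_zero]
      have herase : ∑ i ∈ u.erase ↑j₀, lam' i • f i = ∑ i ∈ u, lam' i • f i :=
        Finset.sum_erase _ (by rw [hj₀zero, zero_smul])
      obtain ⟨t, hts, hind, mu, hmu, heq⟩ := ih (u.erase ↑j₀) (Finset.erase_ssubset j₀.2) lam' hlam'0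
      exact ⟨t, hts.trans (Finset.erase_subset _ _), hind, mu, hmu, by
        rw [← hsum, ← herase, heq]⟩

/-- The cone generated by a finite family on a linearly independent subset is closed. -/
theorem isClosed_cone_indep {ι : Type*} {n : ℕ} (f : ι → (Fin n → ℝ)) (t : Finset ι)
    (hind : LinearIndependent ℝ (fun i : t => f i)) :
    IsClosed {x : Fin n → ℝ | ∃ mu : ι → ℝ, (∀ i, 0 ≤ mu i) ∧ x = ∑ i ∈ t, mu i • f i} := by
  classical
  let L : (t → ℝ) →ₗ[ℝ] (Fin n → ℝ) :=
    { toFun := fun g => ∑ i : t, g i • f i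
      map_add' := by intro a b; simp [add_smul, Finset.sum_add_distrib]
      map_smul' := by intro c a; simp [smul_smul, Finset.smul_sum]
      }
  have hker : LinearMap.ker L = ⊥ := by
    rw [LinearMap.ker_eq_bot']
    intro g hg
    exact funext (Fintype.linearIndependent_iff.mp hind g hg)
  have hemb : Topology.IsClosedEmbedding L := LinearMap.isClosedEmbedding_of_injective hker
  have hset : {x : Fin n → ℝ | ∃ mu : ι → ℝ, (∀ i, 0 ≤ mu i) ∧ x = ∑ i ∈ t, mu i • f i}
      = L '' {g : t → ℝ | ∀ i, 0 ≤ g i} := by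
    ext x
    constructor
    · rintro ⟨mu, hmu, rfl⟩
      refine ⟨fun i => mu i, fun i => hmu i, ?_⟩
      show ∑ i : t, mu ↑i • f ↑i = _
      exact (Finset.sum_attach t (fun i => mu i • f i)).symm ▸ rfl
    · rintro ⟨g, hg, rfl⟩
      refine ⟨fun i => if h : i ∈ t then g ⟨i, h⟩ else 0, fun i => ?_, ?_⟩
      · by_cases h : i ∈ t
        · simpa [h] using hg ⟨i, h⟩
        · simp [h]
      · show (L g : Fin n → ℝ) = _
        rw [← Finset.sum_attach t (fun i => (if h : i ∈ t then g ⟨i, h⟩ else 0) • f i)]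
        exact Finset.sum_congr rfl fun i _ => by rw [dif_pos i.2]
  rw [hset]
  refine hemb.isClosedMap _ ?_
  have : {g : t → ℝ | ∀ i, 0 ≤ g i} = ⋂ i, {g : t → ℝ | 0 ≤ g i} := by
    ext g; simp [Set.mem_iInter]
  rw [this]
  exact isClosed_iInter fun i => isClosed_le continuous_const (continuous_apply i)

/-- A finitely generated cone in `ℝⁿ` is closed. -/
theorem isClosed_cone {ι : Type*} {n : ℕ} (f : ι → (Fin n → ℝ)) (u : Finset ι) :
    IsClosed {x : Fin n → ℝ | ∃ lam : ι → ℝ, (∀ i, 0 ≤ lam i) ∧ x = ∑ i ∈ u, lam i • f i} := by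
  classical
  have hunion : {x : Fin n → ℝ | ∃ lam : ι → ℝ, (∀ i, 0 ≤ lam i) ∧ x = ∑ i ∈ u, lam i • f i}
      = ⋃ t ∈ {t : Finset ι | t ⊆ u ∧ LinearIndependent ℝ (fun i : t => f i)},
        {x : Fin n → ℝ | ∃ mu : ι → ℝ, (∀ i, 0 ≤ mu i) ∧ x = ∑ i ∈ t, mu i • f i} := by
    ext x
    simp only [Set.mem_iUnion, Set.mem_setOf_eq]
    constructor
    · rintro ⟨lam, hlam, rfl⟩
      obtain ⟨t, hts, hind, mu, hmu, heq⟩ := cone_caratheodory f u lam hlam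
      exact ⟨t, ⟨hts, hind⟩, mu, hmu, heq⟩
    · rintro ⟨t, ⟨hts, -⟩, mu, hmu, rfl⟩
      refine ⟨fun i => if i ∈ t then mu i else 0,
        fun i => by by_cases h : i ∈ t <;> simp [h, hmu i], ?_⟩
      rw [← Finset.sum_subset hts (fun i _ hit => by simp [hit])]
      exact Finset.sum_congr rfl fun i hit => by simp [hit]
  rw [hunion]
  refine Set.Finite.isClosed_biUnion ?_ fun t ht => isClosed_cone_indep f t ht.2
  exact Set.Finite.subset (u.powerset : Finset (Finset ι)).finite_toSet
    (fun t ht => by simpa using ht.1)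

/-- Recursive coefficients solving the triangular system. -/
def lamAux {s : ℕ} (idx : Fin s → ℕ) (c : Fin s → Fin s → ℝ) (ε : ℝ) (m : ℕ) : ℝ :=
  if h : m < s then
    (ε ^ idx ⟨m, h⟩)⁻¹ -
      ∑ r ∈ (Finset.range m).attach,
        lamAux idx c ε ↑r * c ⟨↑r, lt_trans (Finset.mem_range.mp r.2) h⟩ ⟨m, h⟩
  else 0
termination_by m
decreasing_by exact Finset.mem_range.mp r.2

theorem lamAux_bounds {s : ℕ} (idx : Fin s → ℕ) (hmono : StrictMono idx)
    (c : Fin s → Fin s → ℝ) (M : ℝ) (hM : 1 ≤ M) (hc : ∀ m l, |c m l| ≤ M)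
    (ε : ℝ) (hε : 0 < ε) (hε1 : ε ≤ 1) (hεM : 2 * s * M * ε ≤ 1) :
    ∀ m : ℕ, 0 ≤ lamAux idx c ε m ∧
      (∀ h : m < s, lamAux idx c ε m ≤ 2 * (ε ^ idx ⟨m, h⟩)⁻¹) := by
  intro m
  induction m using Nat.strong_induction_on with
  | _ m ih =>
    by_cases h : m < s
    · have hpow_pos : (0:ℝ) < (ε ^ idx ⟨m, h⟩)⁻¹ := by positivity
      -- bound each summand
      have hterm : ∀ r ∈ (Finset.range m).attach,
          |lamAux idx c ε ↑r * c ⟨↑r, lt_trans (Finset.mem_range.mp r.2) h⟩ ⟨m, h⟩|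
            ≤ 2 * M * (ε * (ε ^ idx ⟨m, h⟩)⁻¹) := by
        rintro ⟨r, hr⟩ -
        have hrm : r < m := Finset.mem_range.mp hr
        have hrs : r < s := lt_trans hrm h
        obtain ⟨hr0, hr2⟩ := ih r hrm
        have hrub := hr2 hrs
        have hlt : idx ⟨r, hrs⟩ + 1 ≤ idx ⟨m, h⟩ := hmono (Fin.mk_lt_mk.mpr hrm)
        have hpow : ε ^ idx ⟨m, h⟩ ≤ ε ^ idx ⟨r, hrs⟩ * ε := by
          calc ε ^ idx ⟨m, h⟩ ≤ ε ^ (idx ⟨r, hrs⟩ + 1) :=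
                pow_le_pow_of_le_one hε.le hε1 hlt
            _ = ε ^ idx ⟨r, hrs⟩ * ε := by rw [pow_succ]
        have hpr : (0:ℝ) < ε ^ idx ⟨r, hrs⟩ := by positivity
        have hpm : (0:ℝ) < ε ^ idx ⟨m, h⟩ := by positivity
        have hkey : (ε ^ idx ⟨r, hrs⟩)⁻¹ ≤ ε * (ε ^ idx ⟨m, h⟩)⁻¹ := by
          rw [inv_le_iff_one_le_mul₀ hpr]
          have hid : ε ^ idx ⟨m, h⟩ * (ε ^ idx ⟨m, h⟩)⁻¹ = 1 := mul_inv_cancel₀ hpm.ne'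
          nlinarith [mul_le_mul_of_nonneg_right hpow hpow_pos.le]
        rw [abs_mul, abs_of_nonneg hr0]
        calc lamAux idx c ε r * |c ⟨r, hrs⟩ ⟨m, h⟩|
            ≤ (2 * (ε ^ idx ⟨r, hrs⟩)⁻¹) * M :=
              mul_le_mul hrub (hc _ _) (abs_nonneg _) (by positivity)
          _ ≤ (2 * (ε * (ε ^ idx ⟨m, h⟩)⁻¹)) * M := by
              have := hkey
              nlinarith
          _ = 2 * M * (ε * (ε ^ idx ⟨m, h⟩)⁻¹) := by ring
      have hsum : |∑ r ∈ (Finset.range m).attach,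
          lamAux idx c ε ↑r * c ⟨↑r, lt_trans (Finset.mem_range.mp r.2) h⟩ ⟨m, h⟩|
            ≤ (ε ^ idx ⟨m, h⟩)⁻¹ := by
        calc |∑ r ∈ (Finset.range m).attach,
            lamAux idx c ε ↑r * c ⟨↑r, lt_trans (Finset.mem_range.mp r.2) h⟩ ⟨m, h⟩|
            ≤ ∑ r ∈ (Finset.range m).attach,
              |lamAux idx c ε ↑r * c ⟨↑r, lt_trans (Finset.mem_range.mp r.2) h⟩ ⟨m, h⟩| :=
              Finset.abs_sum_le_sum_abs _ _
          _ ≤ ∑ _r ∈ (Finset.range m).attach, 2 * M * (ε * (ε ^ idx ⟨m, h⟩)⁻¹) :=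
              Finset.sum_le_sum hterm
          _ = m * (2 * M * (ε * (ε ^ idx ⟨m, h⟩)⁻¹)) := by
              rw [Finset.sum_const, Finset.card_attach, Finset.card_range, nsmul_eq_mul]
          _ ≤ s * (2 * M * (ε * (ε ^ idx ⟨m, h⟩)⁻¹)) := by
              have hms : (m:ℝ) ≤ s := Nat.cast_le.mpr (le_of_lt h)
              have : (0:ℝ) ≤ 2 * M * (ε * (ε ^ idx ⟨m, h⟩)⁻¹) := by positivity
              nlinarith
          _ = (2 * s * M * ε) * (ε ^ idx ⟨m, h⟩)⁻¹ := by ring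
          _ ≤ 1 * (ε ^ idx ⟨m, h⟩)⁻¹ := mul_le_mul_of_nonneg_right hεM hpow_pos.le
          _ = (ε ^ idx ⟨m, h⟩)⁻¹ := one_mul _
      rw [lamAux, dif_pos h]
      have h1 := abs_le.mp hsum
      constructor
      · linarith [h1.2]
      · intro h'
        have : (⟨m, h'⟩ : Fin s) = ⟨m, h⟩ := rfl
        rw [this]
        linarith [h1.1]
    · rw [lamAux, dif_neg h]
      exact ⟨le_refl 0, fun h' => absurd h' h⟩

/-- Let `i₁ < … < i_s` be positive integers and `C ⊆ ℝ^s` a polyhedral cone.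
Then `C` is positive iff `(ε^{−i₁},…,ε^{−i_s}) ∈ C` for all sufficiently small
`ε > 0`. -/
theorem isPositiveCone_iff_eps_vector_mem {s : ℕ}
    (idx : Fin s → ℕ) (hmono : StrictMono idx) (hpos : ∀ j, 0 < idx j)
    (C : Set (Fin s → ℝ))
    (hC : ∃ G : Finset (Fin s → ℝ), C = {x | ∃ lam : (Fin s → ℝ) → ℝ,
      (∀ v ∈ G, 0 ≤ lam v) ∧ x = ∑ v ∈ G, lam v • v}) :
    IsPositiveCone C ↔
      ∃ ε₀ > (0 : ℝ), ∀ ε : ℝ, 0 < ε → ε < ε₀ →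
        (fun j : Fin s => (ε ^ idx j)⁻¹) ∈ C := by
  classical
  constructor
  · -- forward direction
    intro hposC
    have hexists : ∀ m : Fin s, ∃ w, w ∈ C ∧ (∀ l : Fin s, (l : ℕ) < (m : ℕ) → w l = 0) ∧
        w m = 1 := by
      intro m
      obtain ⟨w, hwC, hw⟩ := hposC ((m : ℕ) + 1) (by omega) (by omega)
      refine ⟨w, hwC, fun l hl => ?_, ?_⟩
      · have := congrFun hw ⟨(l : ℕ), by omega⟩
        simp only [prProj, lastUnit] at this
        rw [if_neg (by omega)] at this
        have hcast : Fin.castLE (by omega : (m : ℕ) + 1 ≤ s) ⟨(l : ℕ), by omega⟩ = l :=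
          Fin.ext rfl
        rwa [hcast] at this
      · have := congrFun hw ⟨(m : ℕ), by omega⟩
        simp only [prProj] at this
        have hcast : Fin.castLE (by omega : (m : ℕ) + 1 ≤ s) ⟨(m : ℕ), by omega⟩ = m :=
          Fin.ext rfl
        rw [hcast] at this
        rw [this]
        simp [lastUnit]
    choose c hcC hc0 hc1 using hexists
    set M : ℝ := 1 + ∑ m : Fin s, ∑ l : Fin s, |c m l| with hM
    have hM1 : 1 ≤ M := by
      have : (0:ℝ) ≤ ∑ m : Fin s, ∑ l : Fin s, |c m l| :=
        Finset.sum_nonneg fun m _ => Finset.sum_nonneg fun l _ => abs_nonneg _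
      linarith
    have hMc : ∀ m l, |c m l| ≤ M := by
      intro m l
      have h1 : |c m l| ≤ ∑ l' : Fin s, |c m l'| :=
        Finset.single_le_sum (f := fun l' => |c m l'|) (fun l' _ => abs_nonneg _)
          (Finset.mem_univ l)
      have h2 : ∑ l' : Fin s, |c m l'| ≤ ∑ m' : Fin s, ∑ l' : Fin s, |c m' l'| :=
        Finset.single_le_sum (f := fun m' => ∑ l' : Fin s, |c m' l'|)
          (fun m' _ => Finset.sum_nonneg fun l' _ => abs_nonneg _) (Finset.mem_univ m)
      linarith
    set K : ℝ := 2 * s * M with hK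
    have hK0 : 0 ≤ K := by positivity
    refine ⟨min 1 (1 / (K + 1)), by positivity, ?_⟩
    intro ε hε hεε₀
    have hε1 : ε ≤ 1 := le_of_lt (lt_of_lt_of_le hεε₀ (min_le_left _ _))
    have hεK : K * ε ≤ 1 := by
      have h2 : ε < 1 / (K + 1) := lt_of_lt_of_le hεε₀ (min_le_right _ _)
      rw [lt_div_iff₀ (by positivity)] at h2
      nlinarith
    have hεM : 2 * s * M * ε ≤ 1 := hεK
    have hbounds := lamAux_bounds idx hmono c M hM1 hMc ε hε hε1 hεM
    set lam : Fin s → ℝ := fun m => lamAux idx c ε (m : ℕ) with hlam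
    have hlam0 : ∀ m, 0 ≤ lam m := fun m => (hbounds m).1
    have hxeq : (∑ m : Fin s, lam m • c m) = fun j : Fin s => (ε ^ idx j)⁻¹ := by
      funext j
      have hsum : (∑ m : Fin s, lam m • c m) j = ∑ m : Fin s, lam m * c m j := by
        rw [Finset.sum_apply]; rfl
      rw [hsum]
      set F : ℕ → ℝ := fun i => lamAux idx c ε i * (if h : i < s then c ⟨i, h⟩ j else 0) with hF
      have h1 : ∑ m : Fin s, lam m * c m j = ∑ i ∈ Finset.range s, F i := by
        rw [← Fin.sum_univ_eq_sum_range F s]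
        refine Finset.sum_congr rfl fun m _ => ?_
        simp only [hF, hlam]
        rw [dif_pos m.2]
      rw [h1]
      have h2 : ∑ i ∈ Finset.range s, F i = ∑ i ∈ Finset.range ((j : ℕ) + 1), F i := by
        refine (Finset.sum_subset (Finset.range_subset_range.mpr (by omega)) ?_).symm
        intro i hi hni
        have hji : (j : ℕ) < i := by
          simp only [Finset.mem_range] at hi hni; omega
        have his : i < s := Finset.mem_range.mp hi
        simp only [hF, dif_pos his]
        rw [hc0 ⟨i, his⟩ j hji, mul_zero]
      rw [h2, Finset.sum_range_succ]
      have h3 : F (j : ℕ) = lamAux idx c ε (j : ℕ) := by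
        simp only [hF, dif_pos j.2]
        have : (⟨(j : ℕ), j.2⟩ : Fin s) = j := Fin.eta j j.2
        rw [this, hc1 j, mul_one]
      have h4 : ∑ i ∈ Finset.range (j : ℕ), F i
          = ∑ r ∈ (Finset.range (j : ℕ)).attach,
              lamAux idx c ε ↑r * c ⟨↑r, lt_trans (Finset.mem_range.mp r.2) j.2⟩
                ⟨(j : ℕ), j.2⟩ := by
        rw [← Finset.sum_attach (Finset.range (j : ℕ)) F]
        refine Finset.sum_congr rfl fun r _ => ?_
        have hrs : (r : ℕ) < s := lt_trans (Finset.mem_range.mp r.2) j.2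
        simp only [hF, dif_pos hrs]
      rw [h3, h4]
      conv_lhs => rw [lamAux, dif_pos j.2]
      have : (⟨(j : ℕ), j.2⟩ : Fin s) = j := Fin.eta j j.2
      rw [this]
      ring
    obtain ⟨G, hCG⟩ := hC
    have hmem : (∑ m : Fin s, lam m • c m) ∈ C := by
      rw [hCG]
      have hcG : ∀ m : Fin s, ∃ g : (Fin s → ℝ) → ℝ, (∀ v ∈ G, 0 ≤ g v) ∧
          c m = ∑ v ∈ G, g v • v := by
        intro m
        have := hcC m
        rw [hCG] at this
        exact this
      choose g hg0 hgeq using hcG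
      refine ⟨fun v => ∑ m : Fin s, lam m * g m v, fun v hv =>
        Finset.sum_nonneg fun m _ => mul_nonneg (hlam0 m) (hg0 m v hv), ?_⟩
      calc ∑ m : Fin s, lam m • c m
          = ∑ m : Fin s, ∑ v ∈ G, (lam m * g m v) • v := by
            refine Finset.sum_congr rfl fun m _ => ?_
            rw [hgeq m, Finset.smul_sum]
            exact Finset.sum_congr rfl fun v _ => (smul_smul _ _ _)
        _ = ∑ v ∈ G, ∑ m : Fin s, (lam m * g m v) • v := Finset.sum_comm
        _ = ∑ v ∈ G, (∑ m : Fin s, lam m * g m v) • v := by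
            refine Finset.sum_congr rfl fun v _ => ?_
            rw [Finset.sum_smul]
    rwa [hxeq] at hmem
  · -- backward direction
    obtain ⟨G, rfl⟩ := hC
    set C : Set (Fin s → ℝ) := {x | ∃ lam : (Fin s → ℝ) → ℝ,
        (∀ v ∈ G, 0 ≤ lam v) ∧ x = ∑ v ∈ G, lam v • v} with hCdef
    rintro ⟨ε₀, hε₀, hmem⟩ k hk1 hks
    set k' : Fin s := ⟨k - 1, by omega⟩ with hk'
    have hDeq : prProj k hks '' C = {y : Fin k → ℝ | ∃ lam : (Fin s → ℝ) → ℝ,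
        (∀ v, 0 ≤ lam v) ∧ y = ∑ v ∈ G, lam v • prProj k hks v} := by
      ext y
      constructor
      · rintro ⟨x, ⟨lam, hlam, rfl⟩, rfl⟩
        refine ⟨fun v => if v ∈ G then lam v else 0, fun v => by
          by_cases h : v ∈ G <;> simp [h, hlam v], ?_⟩
        funext j
        simp only [prProj, Finset.sum_apply, Pi.smul_apply, smul_eq_mul]
        exact Finset.sum_congr rfl fun v hv => by rw [if_pos hv]
      · rintro ⟨lam, hlam, rfl⟩
        refine ⟨∑ v ∈ G, lam v • v, ⟨lam, fun v _ => hlam v, rfl⟩, ?_⟩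
        funext j
        simp [prProj, Finset.sum_apply]
    have hDclosed : IsClosed (prProj k hks '' C) := by
      rw [hDeq]
      exact isClosed_cone (fun v => prProj k hks v) G
    set φ : ℝ → (Fin k → ℝ) := fun ε j => ε ^ (idx k' - idx (Fin.castLE hks j)) with hφ
    have hle : ∀ j : Fin k, idx (Fin.castLE hks j) ≤ idx k' := by
      intro j
      exact hmono.monotone (by simp [Fin.le_def, hk']; omega)
    have hφmem : ∀ ε : ℝ, 0 < ε → ε < ε₀ → φ ε ∈ prProj k hks '' C := by
      intro ε hε hεε₀
      obtain ⟨lam, hlam, hveq⟩ := hmem ε hε hεε₀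
      refine ⟨(ε ^ idx k') • fun j : Fin s => (ε ^ idx j)⁻¹,
        ⟨fun v => ε ^ idx k' * lam v,
          fun v hv => mul_nonneg (by positivity) (hlam v hv), ?_⟩, ?_⟩
      · rw [hveq, Finset.smul_sum]
        exact Finset.sum_congr rfl fun v _ => by rw [smul_smul]
      · funext j
        simp only [prProj, Pi.smul_apply, smul_eq_mul, hφ]
        rw [pow_sub₀ ε (ne_of_gt hε) (hle j)]
    have htend : Filter.Tendsto φ (nhdsWithin 0 (Set.Ioi 0)) (nhds (lastUnit k)) := by
      rw [tendsto_pi_nhds]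
      intro j
      by_cases hj : (j : ℕ) + 1 = k
      · have hcast : Fin.castLE hks j = k' := by
          apply Fin.ext; simp [hk']; omega
        have : ∀ ε : ℝ, φ ε j = 1 := by
          intro ε; simp [hφ, hcast]
        simp only [this, lastUnit, if_pos hj]
        exact tendsto_const_nhds
      · have hlt : idx (Fin.castLE hks j) < idx k' := by
          apply hmono
          simp only [Fin.lt_def, hk', Fin.coe_castLE]
          have := j.2; omega
        have hd : idx k' - idx (Fin.castLE hks j) ≠ 0 := by omega
        have : Filter.Tendsto (fun ε : ℝ => ε ^ (idx k' - idx (Fin.castLE hks j)))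
            (nhdsWithin 0 (Set.Ioi 0)) (nhds 0) := by
          have h0 : ((0:ℝ) ^ (idx k' - idx (Fin.castLE hks j))) = 0 := zero_pow hd
          have h1 : Filter.Tendsto (fun ε : ℝ => ε ^ (idx k' - idx (Fin.castLE hks j)))
              (nhdsWithin 0 (Set.Ioi 0)) (nhds ((0:ℝ) ^ (idx k' - idx (Fin.castLE hks j)))) :=
            ((continuous_pow _).tendsto 0).mono_left nhdsWithin_le_nhds
          rwa [h0] at h1
        simpa [lastUnit, hj, hφ] using this
    have hclosure : lastUnit k ∈ closure (prProj k hks '' C) := by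
      refine mem_closure_of_tendsto htend ?_
      filter_upwards [Ioo_mem_nhdsGT_of_mem (Set.left_mem_Ico.mpr hε₀)] with ε hε
      exact hφmem ε hε.1 hε.2
    exact hDclosed.closure_subset hclosure

end
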